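/- Let (a^t, b^t)_{t≥0} denote the re-parameterized Population EM iterates for Model 2, and assume b^0 ≠ 0 and θ* ≠ 0. Let M₀ denote the linear span of {b^0, θ*} in ℝ^d. Then b^t ∈ M₀ for all t ≥ 0. -/

import Mathlib

open MeasureTheory Real Filter InnerProductGeometry RealInnerProductSpace

/-- Standard Gaussian density on `ℝ^d` (identity covariance, mean zero). -/
noncomputable def gpdf (d : ℕ) (x : EuclideanSpace ℝ (Fin d)) : ℝ :=
  (2 * π) ^ (-(d : ℝ) / 2) * Real.exp (-‖x‖ ^ 2 / 2)

/-- `v_d(y, μ1, μ2) = φ_d(y − μ1)/(φ_d(y − μ1) + φ_d(y − μ2))`. -/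
noncomputable def v2 (d : ℕ) (y μ1 μ2 : EuclideanSpace ℝ (Fin d)) : ℝ :=
  gpdf d (y - μ1) / (gpdf d (y - μ1) + gpdf d (y - μ2))

/-- The density of the mixture `0.5 N(μ1*, I_d) + 0.5 N(μ2*, I_d)`. -/
noncomputable def mix2 (d : ℕ) (μ1s μ2s y : EuclideanSpace ℝ (Fin d)) : ℝ :=
  (gpdf d (y - μ1s) + gpdf d (y - μ2s)) / 2

/-- Population EM iterates `(μ1^t, μ2^t)` for Model 2. -/
noncomputable def em2 (d : ℕ) (μ1s μ2s μ10 μ20 : EuclideanSpace ℝ (Fin d)) :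
    ℕ → EuclideanSpace ℝ (Fin d) × EuclideanSpace ℝ (Fin d)
  | 0 => (μ10, μ20)
  | t + 1 =>
    let p := em2 d μ1s μ2s μ10 μ20 t
    ((∫ y, v2 d y p.1 p.2 * mix2 d μ1s μ2s y)⁻¹ •
        ∫ y, (v2 d y p.1 p.2 * mix2 d μ1s μ2s y) • y,
     (∫ y, (1 - v2 d y p.1 p.2) * mix2 d μ1s μ2s y)⁻¹ •
        ∫ y, ((1 - v2 d y p.1 p.2) * mix2 d μ1s μ2s y) • y)

/-- Re-parameterized iterate `a^t = (μ1^t + μ2^t)/2 − (μ1* + μ2*)/2`. -/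
noncomputable def aIter (d : ℕ) (μ1s μ2s μ10 μ20 : EuclideanSpace ℝ (Fin d)) (t : ℕ) :
    EuclideanSpace ℝ (Fin d) :=
  (2:ℝ)⁻¹ • ((em2 d μ1s μ2s μ10 μ20 t).1 + (em2 d μ1s μ2s μ10 μ20 t).2) -
    (2:ℝ)⁻¹ • (μ1s + μ2s)

/-- Re-parameterized iterate `b^t = (μ2^t − μ1^t)/2`. -/
noncomputable def bIter (d : ℕ) (μ1s μ2s μ10 μ20 : EuclideanSpace ℝ (Fin d)) (t : ℕ) :
    EuclideanSpace ℝ (Fin d) :=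
  (2:ℝ)⁻¹ • ((em2 d μ1s μ2s μ10 μ20 t).2 - (em2 d μ1s μ2s μ10 μ20 t).1)

/-- `θ* = (μ2* − μ1*)/2`. -/
noncomputable def thetaStar (d : ℕ) (μ1s μ2s : EuclideanSpace ℝ (Fin d)) :
    EuclideanSpace ℝ (Fin d) :=
  (2:ℝ)⁻¹ • (μ2s - μ1s)

variable {d : ℕ}

lemma gpdf_pos (x : EuclideanSpace ℝ (Fin d)) : 0 < gpdf d x := by
  unfold gpdf
  positivity

lemma gpdf_cont : Continuous (gpdf d) := by
  unfold gpdf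
  fun_prop

lemma integrable_exp_neg_mul_sq_norm' {b : ℝ} (hb : 0 < b) :
    Integrable (fun v : EuclideanSpace ℝ (Fin d) => Real.exp (-b * ‖v‖ ^ 2)) := by
  have h := (GaussianFourier.integrable_cexp_neg_mul_sq_norm_add
      (V := EuclideanSpace ℝ (Fin d)) (b := (b : ℂ)) (by simpa using hb) 0 0).norm
  simpa [Complex.norm_exp, neg_mul, ← Complex.ofReal_pow, Complex.ofReal_re] using h

lemma norm_sq_half_le (y μ : EuclideanSpace ℝ (Fin d)) :
    ‖y‖ ^ 2 / 2 - ‖μ‖ ^ 2 ≤ ‖y - μ‖ ^ 2 := by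
  have h : ‖y‖ ≤ ‖y - μ‖ + ‖μ‖ := by
    simpa using norm_add_le (y - μ) μ
  have h0 : ‖y‖ ^ 2 ≤ (‖y - μ‖ + ‖μ‖) ^ 2 := by
    exact pow_le_pow_left₀ (norm_nonneg y) h 2
  nlinarith [norm_nonneg (y - μ), norm_nonneg μ, sq_nonneg (‖y - μ‖ - ‖μ‖)]

lemma gpdf_le (y μ : EuclideanSpace ℝ (Fin d)) :
    gpdf d (y - μ) ≤ ((2 * π) ^ (-(d : ℝ) / 2) * Real.exp (‖μ‖ ^ 2 / 2)) *
      Real.exp (-(4:ℝ)⁻¹ * ‖y‖ ^ 2) := by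
  unfold gpdf
  rw [mul_assoc, ← Real.exp_add]
  have hK : (0:ℝ) < (2 * π) ^ (-(d : ℝ) / 2) := by positivity
  refine mul_le_mul_of_nonneg_left ?_ hK.le
  refine Real.exp_le_exp.2 ?_
  have := norm_sq_half_le y μ
  nlinarith

lemma gpdf_mul_norm_le (y μ : EuclideanSpace ℝ (Fin d)) :
    gpdf d (y - μ) * ‖y‖ ≤ ((2 * π) ^ (-(d : ℝ) / 2) * Real.exp (‖μ‖ ^ 2 / 2 + 2)) *
      Real.exp (-(8:ℝ)⁻¹ * ‖y‖ ^ 2) := by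
  have h1 : gpdf d (y - μ) ≤ ((2 * π) ^ (-(d : ℝ) / 2) * Real.exp (‖μ‖ ^ 2 / 2)) *
      Real.exp (-(4:ℝ)⁻¹ * ‖y‖ ^ 2) := gpdf_le y μ
  have h2 : ‖y‖ ≤ Real.exp (‖y‖ ^ 2 / 8 + 2) := by
    have h3 : ‖y‖ ≤ ‖y‖ ^ 2 / 8 + 2 := by nlinarith [sq_nonneg (‖y‖ - 4)]
    have h4 := Real.add_one_le_exp (‖y‖ ^ 2 / 8 + 2)
    linarith
  calc gpdf d (y - μ) * ‖y‖
      ≤ (((2 * π) ^ (-(d : ℝ) / 2) * Real.exp (‖μ‖ ^ 2 / 2)) *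
          Real.exp (-(4:ℝ)⁻¹ * ‖y‖ ^ 2)) * Real.exp (‖y‖ ^ 2 / 8 + 2) := by
        exact mul_le_mul h1 h2 (norm_nonneg y) (by positivity)
    _ = ((2 * π) ^ (-(d : ℝ) / 2) * Real.exp (‖μ‖ ^ 2 / 2 + 2)) *
          Real.exp (-(8:ℝ)⁻¹ * ‖y‖ ^ 2) := by
        rw [mul_assoc, mul_assoc, ← Real.exp_add, ← Real.exp_add, mul_assoc,
          ← Real.exp_add]
        ring_nf

lemma integrable_gpdf_sub (μ : EuclideanSpace ℝ (Fin d)) :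
    Integrable (fun y : EuclideanSpace ℝ (Fin d) => gpdf d (y - μ)) := by
  refine Integrable.mono' ((integrable_exp_neg_mul_sq_norm' (by norm_num : (0:ℝ) < 4⁻¹)).const_mul
      ((2 * π) ^ (-(d : ℝ) / 2) * Real.exp (‖μ‖ ^ 2 / 2)))
    ((gpdf_cont.comp (continuous_id.sub continuous_const)).aestronglyMeasurable) ?_
  filter_upwards with y
  rw [Real.norm_eq_abs, abs_of_pos (gpdf_pos _)]
  exact gpdf_le y μ

variable {μ1s μ2s μ1 μ2 : EuclideanSpace ℝ (Fin d)}

lemma mix2_pos (y : EuclideanSpace ℝ (Fin d)) : 0 < mix2 d μ1s μ2s y := by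
  unfold mix2; have := gpdf_pos (y - μ1s); have := gpdf_pos (y - μ2s); positivity

lemma mix2_cont : Continuous (mix2 d μ1s μ2s) := by
  unfold mix2
  exact ((gpdf_cont.comp (continuous_id.sub continuous_const)).add
    (gpdf_cont.comp (continuous_id.sub continuous_const))).div_const 2

lemma v2_pos (y : EuclideanSpace ℝ (Fin d)) : 0 < v2 d y μ1 μ2 := by
  unfold v2
  have h1 := gpdf_pos (y - μ1); have h2 := gpdf_pos (y - μ2)
  positivity

lemma v2_lt_one (y : EuclideanSpace ℝ (Fin d)) : v2 d y μ1 μ2 < 1 := by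
  unfold v2
  have h1 := gpdf_pos (y - μ1); have h2 := gpdf_pos (y - μ2)
  rw [div_lt_one (by positivity)]
  linarith

lemma v2_cont : Continuous (fun y => v2 d y μ1 μ2) := by
  unfold v2
  refine Continuous.div ?_ ?_ ?_
  · exact gpdf_cont.comp (continuous_id.sub continuous_const)
  · exact (gpdf_cont.comp (continuous_id.sub continuous_const)).add
      (gpdf_cont.comp (continuous_id.sub continuous_const))
  · intro y
    have h1 := gpdf_pos (y - μ1); have h2 := gpdf_pos (y - μ2)
    positivity

lemma integrable_mix2 : Integrable (mix2 d μ1s μ2s) :=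
  ((integrable_gpdf_sub μ1s).add (integrable_gpdf_sub μ2s)).div_const 2

lemma mix2_mul_norm_le (y : EuclideanSpace ℝ (Fin d)) :
    mix2 d μ1s μ2s y * ‖y‖ ≤
      (((2 * π) ^ (-(d : ℝ) / 2) * Real.exp (‖μ1s‖ ^ 2 / 2 + 2)) / 2 +
       ((2 * π) ^ (-(d : ℝ) / 2) * Real.exp (‖μ2s‖ ^ 2 / 2 + 2)) / 2) *
      Real.exp (-(8:ℝ)⁻¹ * ‖y‖ ^ 2) := by
  have h1 := gpdf_mul_norm_le y μ1s
  have h2 := gpdf_mul_norm_le y μ2s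
  unfold mix2
  nlinarith [Real.exp_pos (-(8:ℝ)⁻¹ * ‖y‖ ^ 2)]

/-- Integrability of `w` for any weight `w` dominated by `mix2`. -/
lemma integrable_of_le_mix2 {w : EuclideanSpace ℝ (Fin d) → ℝ} (hc : Continuous w)
    (h0 : ∀ y, 0 ≤ w y) (hle : ∀ y, w y ≤ mix2 d μ1s μ2s y) : Integrable w := by
  refine Integrable.mono' (integrable_mix2 (μ1s := μ1s) (μ2s := μ2s)) hc.aestronglyMeasurable ?_
  filter_upwards with y
  rw [Real.norm_eq_abs, abs_of_nonneg (h0 y)]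
  exact hle y

lemma integrable_smul_of_le_mix2 {w : EuclideanSpace ℝ (Fin d) → ℝ} (hc : Continuous w)
    (h0 : ∀ y, 0 ≤ w y) (hle : ∀ y, w y ≤ mix2 d μ1s μ2s y) :
    Integrable (fun y => w y • y) := by
  refine Integrable.mono' ((integrable_exp_neg_mul_sq_norm'
      (by norm_num : (0:ℝ) < 8⁻¹)).const_mul
      (((2 * π) ^ (-(d : ℝ) / 2) * Real.exp (‖μ1s‖ ^ 2 / 2 + 2)) / 2 +
       ((2 * π) ^ (-(d : ℝ) / 2) * Real.exp (‖μ2s‖ ^ 2 / 2 + 2)) / 2))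
    (hc.smul continuous_id).aestronglyMeasurable ?_
  filter_upwards with y
  rw [norm_smul, Real.norm_eq_abs, abs_of_nonneg (h0 y)]
  calc w y * ‖y‖ ≤ mix2 d μ1s μ2s y * ‖y‖ :=
        mul_le_mul_of_nonneg_right (hle y) (norm_nonneg y)
    _ ≤ _ := mix2_mul_norm_le y

lemma integral_w_pos {w : EuclideanSpace ℝ (Fin d) → ℝ} (hc : Continuous w)
    (hpos : ∀ y, 0 < w y) (hle : ∀ y, w y ≤ mix2 d μ1s μ2s y) :
    0 < ∫ y, w y := by
  rw [integral_pos_iff_support_of_nonneg (fun y => (hpos y).le)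
    (integrable_of_le_mix2 hc (fun y => (hpos y).le) hle)]
  have hsupp : Function.support w = Set.univ := Set.eq_univ_of_forall (fun y => (hpos y).ne')
  rw [hsupp]
  exact isOpen_univ.measure_pos _ ⟨0, trivial⟩

variable (V : Submodule ℝ (EuclideanSpace ℝ (Fin d)))

lemma integral_comp_reflection_add {F : Type*} [NormedAddCommGroup F] [NormedSpace ℝ F]
    (v₀ : EuclideanSpace ℝ (Fin d)) (f : EuclideanSpace ℝ (Fin d) → F) :
    ∫ y, f (V.reflection y + v₀) = ∫ y, f y := by
  have h1 : ∫ y, f (V.reflection y + v₀) = ∫ y, f (y + v₀) :=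
    (V.reflection.measurePreserving).integral_comp
      V.reflection.toHomeomorph.measurableEmbedding (fun y => f (y + v₀))
  rw [h1, integral_add_right_eq_self]

lemma refl_smul_integral {w : EuclideanSpace ℝ (Fin d) → ℝ} (v₀ : EuclideanSpace ℝ (Fin d))
    (hc : Continuous w) (hpos : ∀ y, 0 < w y) (hle : ∀ y, w y ≤ mix2 d μ1s μ2s y)
    (hinv : ∀ y, w (V.reflection y + v₀) = w y) :
    V.reflection ((∫ y, w y)⁻¹ • ∫ y, w y • y)
      = (∫ y, w y)⁻¹ • (∫ y, w y • y) - v₀ := by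
  have hw_int : Integrable w := integrable_of_le_mix2 hc (fun y => (hpos y).le) hle
  have hwy_int : Integrable (fun y => w y • y) :=
    integrable_smul_of_le_mix2 hc (fun y => (hpos y).le) hle
  set R := V.reflection with hR
  set L : EuclideanSpace ℝ (Fin d) →L[ℝ] EuclideanSpace ℝ (Fin d) :=
    R.toLinearIsometry.toContinuousLinearMap with hL
  have hLR : ∀ x, L x = R x := fun x => rfl
  have hc_pos : 0 < ∫ y, w y := integral_w_pos hc hpos hle
  have hi1 : Integrable (fun y => w y • R y) := by
    have : (fun y => w y • R y) = fun y => L (w y • y) := by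
      funext y; rw [hLR, R.map_smul]
    rw [this]
    exact L.integrable_comp hwy_int
  have hI : (∫ y, w y • y) = R (∫ y, w y • y) + (∫ y, w y) • v₀ := by
    conv_lhs => rw [← integral_comp_reflection_add V v₀ (fun z => w z • z)]
    have heq : ∀ y, w (R y + v₀) • (R y + v₀) = w y • R y + w y • v₀ := by
      intro y; rw [hinv y, smul_add]
    simp_rw [← hR, heq]
    rw [integral_add hi1 (hw_int.smul_const v₀), integral_smul_const]
    congr 1
    have : (fun y => w y • R y) = fun y => L (w y • y) := by
      funext y; rw [hLR, R.map_smul]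
    rw [this, L.integral_comp_comm hwy_int]
    rfl
  have hRI : R (∫ y, w y • y) = (∫ y, w y • y) - (∫ y, w y) • v₀ :=
    eq_sub_of_add_eq hI.symm
  rw [R.map_smul, hRI, smul_sub, smul_smul, inv_mul_cancel₀ hc_pos.ne', one_smul]

lemma gpdf_eq (x : EuclideanSpace ℝ (Fin d)) :
    gpdf d x = (2 * π) ^ (-(d : ℝ) / 2) * Real.exp (-‖x‖ ^ 2 / 2) := rfl

lemma mix2_refl_invariant {y v₀ : EuclideanSpace ℝ (Fin d)}
    (h1 : V.reflection μ1s = μ1s - v₀) (h2 : V.reflection μ2s = μ2s - v₀) :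
    mix2 d μ1s μ2s (V.reflection y + v₀) = mix2 d μ1s μ2s y := by
  have e1 : V.reflection y + v₀ - μ1s = V.reflection (y - μ1s) := by
    rw [map_sub, h1]; abel
  have e2 : V.reflection y + v₀ - μ2s = V.reflection (y - μ2s) := by
    rw [map_sub, h2]; abel
  unfold mix2
  rw [e1, e2, gpdf_eq, gpdf_eq, V.reflection.norm_map, V.reflection.norm_map,
    ← gpdf_eq, ← gpdf_eq]

lemma inner_refl_add {y v₀ u : EuclideanSpace ℝ (Fin d)} (hu : u ∈ V)
    (horth : ∀ u ∈ V, ⟪v₀, u⟫ = 0) :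
    ⟪V.reflection y + v₀, u⟫ = ⟪y, u⟫ := by
  have h := V.reflection.inner_map_map y u
  rw [Submodule.reflection_mem_subspace_eq_self hu] at h
  rw [inner_add_left, horth u hu, add_zero, h]

set_option maxHeartbeats 1000000 in
lemma v2_refl_invariant {y v₀ : EuclideanSpace ℝ (Fin d)} (h12 : μ1 - μ2 ∈ V)
    (horth : ∀ u ∈ V, ⟪v₀, u⟫ = 0) :
    v2 d (V.reflection y + v₀) μ1 μ2 = v2 d y μ1 μ2 := by
  set z := V.reflection y + v₀ with hzdef
  have hz : ⟪z, μ1 - μ2⟫ = ⟪y, μ1 - μ2⟫ := inner_refl_add V h12 horth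
  rw [inner_sub_right, inner_sub_right] at hz
  have hnorm : ‖z - μ1‖ ^ 2 + ‖y - μ2‖ ^ 2 = ‖y - μ1‖ ^ 2 + ‖z - μ2‖ ^ 2 := by
    rw [norm_sub_sq_real, norm_sub_sq_real, norm_sub_sq_real, norm_sub_sq_real]
    linarith
  have hab : gpdf d (z - μ1) * gpdf d (y - μ2) = gpdf d (y - μ1) * gpdf d (z - μ2) := by
    rw [gpdf_eq, gpdf_eq, gpdf_eq, gpdf_eq]
    rw [mul_mul_mul_comm, ← Real.exp_add, mul_mul_mul_comm, ← Real.exp_add]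
    congr 2
    linarith
  have ha := gpdf_pos (z - μ1); have hb := gpdf_pos (z - μ2)
  have ha' := gpdf_pos (y - μ1); have hb' := gpdf_pos (y - μ2)
  unfold v2
  rw [div_eq_div_iff (by positivity) (by positivity), mul_add, mul_add, hab]
  ring

set_option maxHeartbeats 1000000 in
lemma key_mem (hθV : (2:ℝ)⁻¹ • (μ2s - μ1s) ∈ V) (h21 : μ2 - μ1 ∈ V) :
    (∫ y, ((1 - v2 d y μ1 μ2) * mix2 d μ1s μ2s y))⁻¹ •
        (∫ y, ((1 - v2 d y μ1 μ2) * mix2 d μ1s μ2s y) • y) -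
      (∫ y, (v2 d y μ1 μ2 * mix2 d μ1s μ2s y))⁻¹ •
        (∫ y, (v2 d y μ1 μ2 * mix2 d μ1s μ2s y) • y) ∈ V := by
  set m : EuclideanSpace ℝ (Fin d) := (2:ℝ)⁻¹ • (μ1s + μ2s) with hm
  set v₀ : EuclideanSpace ℝ (Fin d) :=
    (μ1s + μ2s) - (2:ℝ) • V.starProjection m with hv₀
  have hv₀' : v₀ = (2:ℝ) • (m - V.starProjection m) := by
    rw [hv₀, smul_sub, hm, smul_smul]
    norm_num
  have horth : ∀ u ∈ V, ⟪v₀, u⟫ = 0 := by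
    intro u hu
    have hmem : v₀ ∈ Vᗮ := by
      rw [hv₀']
      exact Submodule.smul_mem _ _ (Submodule.sub_starProjection_mem_orthogonal (K := V) m)
    rw [real_inner_comm]
    exact hmem u hu
  have hproj1 : V.starProjection μ1s =
      V.starProjection m - (2:ℝ)⁻¹ • (μ2s - μ1s) := by
    have hm1 : μ1s = m - (2:ℝ)⁻¹ • (μ2s - μ1s) := by rw [hm]; module
    conv_lhs => rw [hm1]
    rw [map_sub, Submodule.starProjection_eq_self_iff.2 hθV]
  have hproj2 : V.starProjection μ2s =
      V.starProjection m + (2:ℝ)⁻¹ • (μ2s - μ1s) := by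
    have hm2 : μ2s = m + (2:ℝ)⁻¹ • (μ2s - μ1s) := by rw [hm]; module
    conv_lhs => rw [hm2]
    rw [map_add, Submodule.starProjection_eq_self_iff.2 hθV]
  have hR1 : V.reflection μ1s = μ1s - v₀ := by
    rw [Submodule.reflection_apply, hproj1, hv₀, two_smul]
    module
  have hR2 : V.reflection μ2s = μ2s - v₀ := by
    rw [Submodule.reflection_apply, hproj2, hv₀, two_smul]
    module
  have h12 : μ1 - μ2 ∈ V := by
    have := V.neg_mem h21
    rwa [neg_sub] at this
  have hinv1 : ∀ y, (fun y => v2 d y μ1 μ2 * mix2 d μ1s μ2s y) (V.reflection y + v₀)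
      = (fun y => v2 d y μ1 μ2 * mix2 d μ1s μ2s y) y := by
    intro y
    simp only
    rw [v2_refl_invariant V h12 horth, mix2_refl_invariant V hR1 hR2]
  have hinv2 : ∀ y, (fun y => (1 - v2 d y μ1 μ2) * mix2 d μ1s μ2s y) (V.reflection y + v₀)
      = (fun y => (1 - v2 d y μ1 μ2) * mix2 d μ1s μ2s y) y := by
    intro y
    simp only
    rw [v2_refl_invariant V h12 horth, mix2_refl_invariant V hR1 hR2]
  have H1 := refl_smul_integral V (w := fun y => v2 d y μ1 μ2 * mix2 d μ1s μ2s y) v₀ (v2_cont.mul mix2_cont)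
    (fun y => mul_pos (v2_pos y) (mix2_pos y))
    (fun y => mul_le_of_le_one_left (mix2_pos y).le (v2_lt_one y).le) hinv1
  have H2 := refl_smul_integral V (w := fun y => (1 - v2 d y μ1 μ2) * mix2 d μ1s μ2s y) v₀ ((continuous_const.sub v2_cont).mul mix2_cont)
    (fun y => mul_pos (by linarith [v2_lt_one (μ1 := μ1) (μ2 := μ2) y]) (mix2_pos y))
    (fun y => mul_le_of_le_one_left (mix2_pos y).le
      (by linarith [v2_pos (μ1 := μ1) (μ2 := μ2) y])) hinv2
  refine (Submodule.reflection_eq_self_iff _).1 ?_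
  rw [map_sub, H1, H2, sub_sub_sub_cancel_right]


/-- The iterates `b^t` stay in the span `M₀` of `{b^0, θ*}`. -/
theorem stmt11 (d : ℕ) (hd : 1 ≤ d) (μ1s μ2s μ10 μ20 : EuclideanSpace ℝ (Fin d))
    (hb0 : bIter d μ1s μ2s μ10 μ20 0 ≠ 0) (hθ : thetaStar d μ1s μ2s ≠ 0) :
    ∀ t : ℕ, bIter d μ1s μ2s μ10 μ20 t ∈
      Submodule.span ℝ {bIter d μ1s μ2s μ10 μ20 0, thetaStar d μ1s μ2s} := by
  intro t
  induction t with
  | zero => exact Submodule.subset_span (Set.mem_insert _ _)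
  | succ t ih =>
    set V := Submodule.span ℝ {bIter d μ1s μ2s μ10 μ20 0, thetaStar d μ1s μ2s} with hV
    set p := em2 d μ1s μ2s μ10 μ20 t with hp
    have hθV : (2:ℝ)⁻¹ • (μ2s - μ1s) ∈ V := by
      refine Submodule.subset_span ?_
      right
      rfl
    have h21 : p.2 - p.1 ∈ V := by
      have h2 : p.2 - p.1 = (2:ℝ) • bIter d μ1s μ2s μ10 μ20 t := by
        unfold bIter
        rw [smul_smul]
        norm_num
        rfl
      rw [h2]
      exact V.smul_mem _ ih
    have hkey := key_mem V (μ1 := p.1) (μ2 := p.2) hθV h21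
    have hb : bIter d μ1s μ2s μ10 μ20 (t+1) = (2:ℝ)⁻¹ •
        ((∫ y, ((1 - v2 d y p.1 p.2) * mix2 d μ1s μ2s y))⁻¹ •
            (∫ y, ((1 - v2 d y p.1 p.2) * mix2 d μ1s μ2s y) • y) -
          (∫ y, (v2 d y p.1 p.2 * mix2 d μ1s μ2s y))⁻¹ •
            (∫ y, (v2 d y p.1 p.2 * mix2 d μ1s μ2s y) • y)) := rfl
    rw [hb]
    exact V.smul_mem _ hkey
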